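/- In the configuration above, the area of the parallelogram C₂ D C₁ C equals the area of the triangle A B C. -/

import Mathlib

open EuclideanGeometry

/-- In the right-triangle configuration, the area of the parallelogram `C₂ D C₁ C`
equals the area of the triangle `A B C`. -/
theorem parallelogram_area_eq_triangle_area (A B C : ℂ)
    (hind : AffineIndependent ℝ ![A, B, C])
    (hright : EuclideanGeometry.angle A C B = Real.pi / 2)
    (C₁ C₂ D : ℂ)
    (hC₁ : C₁ = A + Complex.exp ((Real.pi / 3 : ℂ) * Complex.I) * (B - A))
    (hC₂ : C₂ = B + Complex.exp (-(Real.pi / 3 : ℂ) * Complex.I) * (A - B))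
    (hD : D = A + Complex.exp ((Real.pi / 3 : ℂ) * Complex.I) * (C - A)) :
    |(D - C₂).re * (C - C₂).im - (D - C₂).im * (C - C₂).re| =
      1 / 2 * |(B - A).re * (C - A).im - (B - A).im * (C - A).re| := by
  have horth : (inner ℝ (A - C) (B - C) : ℝ) = 0 := by
    rw [InnerProductGeometry.inner_eq_zero_iff_angle_eq_pi_div_two]
    exact hright
  rw [Complex.inner] at horth
  simp only [Complex.mul_re, Complex.conj_re, Complex.conj_im, Complex.sub_re,
    Complex.sub_im] at horth
  have h1 : Complex.exp ((Real.pi / 3 : ℂ) * Complex.I)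
      = (1 / 2 : ℝ) + (Real.sqrt 3 / 2 : ℝ) * Complex.I := by
    rw [show ((Real.pi : ℂ) / 3) = ((Real.pi / 3 : ℝ) : ℂ) by push_cast; ring,
      Complex.exp_mul_I, ← Complex.ofReal_cos, ← Complex.ofReal_sin,
      Real.cos_pi_div_three, Real.sin_pi_div_three]
  have h2 : Complex.exp (-(Real.pi / 3 : ℂ) * Complex.I)
      = (1 / 2 : ℝ) - (Real.sqrt 3 / 2 : ℝ) * Complex.I := by
    rw [show (-((Real.pi : ℂ) / 3)) = ((-(Real.pi / 3) : ℝ) : ℂ) by push_cast; ring,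
      Complex.exp_mul_I, ← Complex.ofReal_cos, ← Complex.ofReal_sin,
      Real.cos_neg, Real.sin_neg, Real.cos_pi_div_three, Real.sin_pi_div_three]
    push_cast
    ring
  subst hC₁ hC₂ hD
  rw [h1, h2]
  have hs : Real.sqrt 3 ^ 2 = 3 := Real.sq_sqrt (by norm_num)
  simp only [Complex.add_re, Complex.add_im, Complex.sub_re, Complex.sub_im,
    Complex.mul_re, Complex.mul_im, Complex.ofReal_re, Complex.ofReal_im,
    Complex.I_re, Complex.I_im]
  have habs : ∀ x : ℝ, (1:ℝ)/2 * |x| = |((1/2) * x : ℝ)| := fun x => by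
    rw [abs_mul, abs_of_nonneg (by norm_num : (0:ℝ) ≤ 1/2)]
  rw [habs]
  congr 1
  linear_combination (-(Real.sqrt 3)/2) * horth +
    (((B.re - A.re) * (C.im - A.im) - (B.im - A.im) * (C.re - A.re))/4) * hs
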